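/- Define μ(z) := N(z)/(1 + D(z)) where N(z) = (1/(2e)) Σ_{n≥1} [cos(x/n!) − (2iy/n!) sin(x/n!)] e^{−y²/n!²}/(2·n!) and D(z) = (1/(2e)) Σ_{n≥1} [cos(x/n!) + (2iy/n!) sin(x/n!)] e^{−y²/n!²}/(2·n!), z = x+iy. Then both series converge uniformly with |N(z)|, |D(z)| ≤ (e−1)/(2e) < 1/2, the denominator never vanishes, and ‖μ‖_∞ ≤ (e−1)/(e+1) < 1/2. -/

import Mathlib

noncomputable section

open Filter

/-- `m`-th term of the numerator series:
`[cos(x/m!) − (2iy/m!) sin(x/m!)] e^{−y²/m!²}/(2·m!)`. -/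
def termN (m : ℕ) (z : ℂ) : ℂ :=
  (((Real.cos (z.re / (Nat.factorial m : ℝ)) : ℝ) : ℂ)
      - 2 * Complex.I * ((z.im / (Nat.factorial m : ℝ) : ℝ) : ℂ)
        * ((Real.sin (z.re / (Nat.factorial m : ℝ)) : ℝ) : ℂ))
    * ((Real.exp (-(z.im ^ 2) / ((Nat.factorial m : ℝ)) ^ 2)
        / (2 * (Nat.factorial m : ℝ)) : ℝ) : ℂ)

/-- `m`-th term of the denominator series:
`[cos(x/m!) + (2iy/m!) sin(x/m!)] e^{−y²/m!²}/(2·m!)`. -/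
def termD (m : ℕ) (z : ℂ) : ℂ :=
  (((Real.cos (z.re / (Nat.factorial m : ℝ)) : ℝ) : ℂ)
      + 2 * Complex.I * ((z.im / (Nat.factorial m : ℝ) : ℝ) : ℂ)
        * ((Real.sin (z.re / (Nat.factorial m : ℝ)) : ℝ) : ℂ))
    * ((Real.exp (-(z.im ^ 2) / ((Nat.factorial m : ℝ)) ^ 2)
        / (2 * (Nat.factorial m : ℝ)) : ℝ) : ℂ)

/-- `N(z) = (1/(2e)) Σ_{n≥1} termN n z`. -/
def Nfun (z : ℂ) : ℂ := ((2 * Real.exp 1 : ℝ) : ℂ)⁻¹ * ∑' k : ℕ, termN (k + 1) z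

/-- `D(z) = (1/(2e)) Σ_{n≥1} termD n z`. -/
def Dfun (z : ℂ) : ℂ := ((2 * Real.exp 1 : ℝ) : ℂ)⁻¹ * ∑' k : ℕ, termD (k + 1) z

/-- Key real inequality: `(1 + 2|t|) e^{-t²} ≤ 2`. -/
lemma key_ineq (t : ℝ) : (1 + 2 * |t|) * Real.exp (-(t ^ 2)) ≤ 2 := by
  have h1 : Real.exp (-(t ^ 2)) ≤ 1 := by
    simpa using Real.exp_le_exp.mpr (neg_nonpos.mpr (sq_nonneg t))
  have h2 : 2 * |t| ≤ Real.exp (t ^ 2) := by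
    have ha : 2 * |t| ≤ t ^ 2 + 1 := by nlinarith [sq_abs t, sq_nonneg (|t| - 1)]
    have hb : t ^ 2 + 1 ≤ Real.exp (t ^ 2) := Real.add_one_le_exp _
    linarith
  have h3 : Real.exp (-(t ^ 2)) * Real.exp (t ^ 2) = 1 := by
    rw [← Real.exp_add]; simp
  nlinarith [Real.exp_pos (-(t ^ 2)), Real.exp_pos (t ^ 2), abs_nonneg t]

lemma main_bound (m : ℕ) (z : ℂ) (A : ℂ)
    (hA : ‖A‖ ≤ 1 + 2 * |z.im / (Nat.factorial m : ℝ)|) :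
    ‖(A * ((Real.exp (-(z.im ^ 2) / ((Nat.factorial m : ℝ)) ^ 2)
        / (2 * (Nat.factorial m : ℝ)) : ℝ) : ℂ))‖ ≤ 1 / (Nat.factorial m : ℝ) := by
  set F : ℝ := (Nat.factorial m : ℝ) with hFdef
  have hF : (0:ℝ) < F := by
    rw [hFdef]; exact_mod_cast Nat.factorial_pos m
  set t : ℝ := z.im / F with htdef
  have hexp : -(z.im ^ 2) / F ^ 2 = -(t ^ 2) := by
    rw [htdef]; field_simp
  have hE : (0:ℝ) ≤ Real.exp (-(z.im ^ 2) / F ^ 2) / (2 * F) := by positivity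
  have habs : ‖(A * ((Real.exp (-(z.im ^ 2) / F ^ 2) / (2 * F) : ℝ) : ℂ))‖
      = ‖A‖ * (Real.exp (-(z.im ^ 2) / F ^ 2) / (2 * F)) := by
    rw [norm_mul, Complex.norm_real, Real.norm_eq_abs, abs_of_nonneg hE]
  rw [habs, hexp]
  have hkey := key_ineq t
  have hEt : (0:ℝ) ≤ Real.exp (-(t ^ 2)) / (2 * F) := by positivity
  calc ‖A‖ * (Real.exp (-(t ^ 2)) / (2 * F))
      ≤ (1 + 2 * |t|) * (Real.exp (-(t ^ 2)) / (2 * F)) :=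
        mul_le_mul_of_nonneg_right hA hEt
    _ = ((1 + 2 * |t|) * Real.exp (-(t ^ 2))) / (2 * F) := by ring
    _ ≤ 2 / (2 * F) := by gcongr
    _ = 1 / F := by field_simp

lemma abs_sub_le' (a b : ℂ) : ‖(a - b)‖ ≤ ‖a‖ + ‖b‖ := by
  simpa [sub_eq_add_neg] using norm_add_le a (-b)

lemma termN_bound (m : ℕ) (z : ℂ) :
    ‖(termN m z)‖ ≤ 1 / (Nat.factorial m : ℝ) := by
  apply main_bound
  set t : ℝ := z.im / (Nat.factorial m : ℝ)
  set c : ℝ := Real.cos (z.re / (Nat.factorial m : ℝ))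
  set s : ℝ := Real.sin (z.re / (Nat.factorial m : ℝ))
  have h1 : ‖((c:ℂ) - 2 * Complex.I * (t:ℂ) * (s:ℂ))‖
      ≤ ‖(c:ℂ)‖ + ‖(2 * Complex.I * (t:ℂ) * (s:ℂ))‖ := abs_sub_le' _ _
  have h2 : ‖(2 * Complex.I * (t:ℂ) * (s:ℂ))‖ = 2 * (|t| * |s|) := by
    simp [norm_mul, Complex.norm_I, Complex.norm_real, Complex.norm_two]; ring
  have hc : |c| ≤ 1 := Real.abs_cos_le_one _
  have hs : |s| ≤ 1 := Real.abs_sin_le_one _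
  calc ‖((c:ℂ) - 2 * Complex.I * (t:ℂ) * (s:ℂ))‖
      ≤ ‖(c:ℂ)‖ + ‖(2 * Complex.I * (t:ℂ) * (s:ℂ))‖ := h1
    _ = |c| + 2 * (|t| * |s|) := by rw [h2, Complex.norm_real, Real.norm_eq_abs]
    _ ≤ 1 + 2 * |t| := by nlinarith [abs_nonneg t, abs_nonneg s]

lemma termD_bound (m : ℕ) (z : ℂ) :
    ‖(termD m z)‖ ≤ 1 / (Nat.factorial m : ℝ) := by
  apply main_bound
  set t : ℝ := z.im / (Nat.factorial m : ℝ)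
  set c : ℝ := Real.cos (z.re / (Nat.factorial m : ℝ))
  set s : ℝ := Real.sin (z.re / (Nat.factorial m : ℝ))
  have h1 : ‖((c:ℂ) + 2 * Complex.I * (t:ℂ) * (s:ℂ))‖
      ≤ ‖(c:ℂ)‖ + ‖(2 * Complex.I * (t:ℂ) * (s:ℂ))‖ :=
    norm_add_le _ _
  have h2 : ‖(2 * Complex.I * (t:ℂ) * (s:ℂ))‖ = 2 * (|t| * |s|) := by
    simp [norm_mul, Complex.norm_I, Complex.norm_real, Complex.norm_two]; ring
  have hc : |c| ≤ 1 := Real.abs_cos_le_one _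
  have hs : |s| ≤ 1 := Real.abs_sin_le_one _
  calc ‖((c:ℂ) + 2 * Complex.I * (t:ℂ) * (s:ℂ))‖
      ≤ ‖(c:ℂ)‖ + ‖(2 * Complex.I * (t:ℂ) * (s:ℂ))‖ := h1
    _ = |c| + 2 * (|t| * |s|) := by rw [h2, Complex.norm_real, Real.norm_eq_abs]
    _ ≤ 1 + 2 * |t| := by nlinarith [abs_nonneg t, abs_nonneg s]

lemma hasSum_shift : HasSum (fun k : ℕ => (1:ℝ) / (Nat.factorial (k + 1) : ℝ))
    (Real.exp 1 - 1) := by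
  have hE : HasSum (fun n : ℕ => (1:ℝ) / (Nat.factorial n : ℝ)) (Real.exp 1) := by
    have := NormedSpace.expSeries_div_hasSum_exp (1:ℝ)
    simpa [Real.exp_eq_exp_ℝ] using this
  have h := (hasSum_nat_add_iff' (f := fun n : ℕ => (1:ℝ) / (Nat.factorial n : ℝ)) 1).2 hE
  simpa using h

/-- Both series converge uniformly on `ℂ`, `|N(z)|, |D(z)| ≤ (e−1)/(2e) < 1/2`,
the denominator `1 + D(z)` never vanishes, and
`‖μ‖_∞ ≤ (e−1)/(e+1) < 1/2` for `μ = N/(1+D)`. -/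
theorem stmt8 :
    TendstoUniformlyOn
      (fun m z => ((2 * Real.exp 1 : ℝ) : ℂ)⁻¹ * ∑ k ∈ Finset.range m, termN (k + 1) z)
      Nfun atTop Set.univ ∧
    TendstoUniformlyOn
      (fun m z => ((2 * Real.exp 1 : ℝ) : ℂ)⁻¹ * ∑ k ∈ Finset.range m, termD (k + 1) z)
      Dfun atTop Set.univ ∧
    (∀ z, ‖Nfun z‖ ≤ (Real.exp 1 - 1) / (2 * Real.exp 1)) ∧
    (∀ z, ‖Dfun z‖ ≤ (Real.exp 1 - 1) / (2 * Real.exp 1)) ∧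
    (Real.exp 1 - 1) / (2 * Real.exp 1) < 1 / 2 ∧
    (∀ z, 1 + Dfun z ≠ 0) ∧
    (∀ z, ‖Nfun z / (1 + Dfun z)‖ ≤ (Real.exp 1 - 1) / (Real.exp 1 + 1)) ∧
    (Real.exp 1 - 1) / (Real.exp 1 + 1) < 1 / 2 := by
  have he0 : (0:ℝ) < Real.exp 1 := Real.exp_pos 1
  have he1 : (1:ℝ) < Real.exp 1 := by
    have := Real.exp_one_gt_d9; linarith
  have he3 : Real.exp 1 < 3 := by
    have := Real.exp_one_lt_d9; linarith
  set c : ℂ := ((2 * Real.exp 1 : ℝ) : ℂ)⁻¹ with hcdef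
  have hcabs : ‖c‖ = (2 * Real.exp 1)⁻¹ := by
    rw [hcdef, norm_inv, Complex.norm_real, Real.norm_eq_abs, abs_of_pos (by positivity)]
  -- summability
  have hU := hasSum_shift
  have hu : Summable (fun k : ℕ => (2 * Real.exp 1)⁻¹ * ((1:ℝ) / (Nat.factorial (k + 1) : ℝ))) :=
    hU.summable.mul_left _
  -- uniform convergence, numerator
  have hboundN : ∀ (n : ℕ) (x : ℂ), x ∈ (Set.univ : Set ℂ) →
      ‖c * termN (n + 1) x‖ ≤ (2 * Real.exp 1)⁻¹ * ((1:ℝ) / (Nat.factorial (n + 1) : ℝ)) := by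
    intro n x _
    rw [norm_mul, hcabs]
    exact mul_le_mul_of_nonneg_left (termN_bound (n + 1) x) (by positivity)
  have hboundD : ∀ (n : ℕ) (x : ℂ), x ∈ (Set.univ : Set ℂ) →
      ‖c * termD (n + 1) x‖ ≤ (2 * Real.exp 1)⁻¹ * ((1:ℝ) / (Nat.factorial (n + 1) : ℝ)) := by
    intro n x _
    rw [norm_mul, hcabs]
    exact mul_le_mul_of_nonneg_left (termD_bound (n + 1) x) (by positivity)
  have hN : TendstoUniformlyOn
      (fun m z => c * ∑ k ∈ Finset.range m, termN (k + 1) z) Nfun atTop Set.univ := by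
    have h := tendstoUniformlyOn_tsum_nat hu hboundN
    have e1 : (fun m z => c * ∑ k ∈ Finset.range m, termN (k + 1) z)
        = fun N z => ∑ n ∈ Finset.range N, c * termN (n + 1) z := by
      funext m z; rw [Finset.mul_sum]
    have e2 : Nfun = fun z => ∑' n : ℕ, c * termN (n + 1) z := by
      funext z; rw [Nfun, tsum_mul_left]
    rw [e1, e2]; exact h
  have hD : TendstoUniformlyOn
      (fun m z => c * ∑ k ∈ Finset.range m, termD (k + 1) z) Dfun atTop Set.univ := by
    have h := tendstoUniformlyOn_tsum_nat hu hboundD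
    have e1 : (fun m z => c * ∑ k ∈ Finset.range m, termD (k + 1) z)
        = fun N z => ∑ n ∈ Finset.range N, c * termD (n + 1) z := by
      funext m z; rw [Finset.mul_sum]
    have e2 : Dfun = fun z => ∑' n : ℕ, c * termD (n + 1) z := by
      funext z; rw [Dfun, tsum_mul_left]
    rw [e1, e2]; exact h
  -- bounds on N, D
  have htsumN : ∀ z, ‖(∑' k : ℕ, termN (k + 1) z)‖ ≤ Real.exp 1 - 1 := by
    intro z
    exact tsum_of_norm_bounded hU fun k => by
      exact termN_bound (k + 1) z
  have htsumD : ∀ z, ‖(∑' k : ℕ, termD (k + 1) z)‖ ≤ Real.exp 1 - 1 := by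
    intro z
    exact tsum_of_norm_bounded hU fun k => by
      exact termD_bound (k + 1) z
  have hNb : ∀ z, ‖(Nfun z)‖ ≤ (Real.exp 1 - 1) / (2 * Real.exp 1) := by
    intro z
    rw [Nfun, norm_mul, hcabs]
    calc (2 * Real.exp 1)⁻¹ * ‖(∑' k : ℕ, termN (k + 1) z)‖
        ≤ (2 * Real.exp 1)⁻¹ * (Real.exp 1 - 1) :=
          mul_le_mul_of_nonneg_left (htsumN z) (by positivity)
      _ = (Real.exp 1 - 1) / (2 * Real.exp 1) := by ring
  have hDb : ∀ z, ‖(Dfun z)‖ ≤ (Real.exp 1 - 1) / (2 * Real.exp 1) := by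
    intro z
    rw [Dfun, norm_mul, hcabs]
    calc (2 * Real.exp 1)⁻¹ * ‖(∑' k : ℕ, termD (k + 1) z)‖
        ≤ (2 * Real.exp 1)⁻¹ * (Real.exp 1 - 1) :=
          mul_le_mul_of_nonneg_left (htsumD z) (by positivity)
      _ = (Real.exp 1 - 1) / (2 * Real.exp 1) := by ring
  have hhalf : (Real.exp 1 - 1) / (2 * Real.exp 1) < 1 / 2 := by
    rw [div_lt_div_iff₀ (by positivity) (by norm_num)]; linarith
  -- denominator bound
  have hden : ∀ z, (Real.exp 1 + 1) / (2 * Real.exp 1) ≤ ‖(1 + Dfun z)‖ := by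
    intro z
    have h1 : ‖(1:ℂ)‖ ≤ ‖(1 + Dfun z)‖ + ‖(Dfun z)‖ := by
      simpa using norm_add_le (1 + Dfun z) (-Dfun z)
    have h2 : ‖(1:ℂ)‖ = 1 := norm_one
    have h3 : (Real.exp 1 + 1) / (2 * Real.exp 1)
        = 1 - (Real.exp 1 - 1) / (2 * Real.exp 1) := by field_simp; ring
    have := hDb z
    rw [h3]; linarith [h1, h2 ▸ h1]
  have hdenpos : (0:ℝ) < (Real.exp 1 + 1) / (2 * Real.exp 1) := by positivity
  have hne : ∀ z, 1 + Dfun z ≠ 0 := by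
    intro z hz
    have := hden z
    rw [hz, norm_zero] at this
    linarith
  have hquot : ∀ z, ‖(Nfun z / (1 + Dfun z))‖
      ≤ (Real.exp 1 - 1) / (Real.exp 1 + 1) := by
    intro z
    rw [norm_div]
    have h := div_le_div₀ (div_nonneg (by linarith) (by positivity))
      (hNb z) hdenpos (hden z)
    calc ‖(Nfun z)‖ / ‖(1 + Dfun z)‖
        ≤ ((Real.exp 1 - 1) / (2 * Real.exp 1)) / ((Real.exp 1 + 1) / (2 * Real.exp 1)) := h
      _ = (Real.exp 1 - 1) / (Real.exp 1 + 1) := by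
          have h1 : Real.exp 1 + 1 ≠ 0 := by positivity
          have h2 : (2:ℝ) * Real.exp 1 ≠ 0 := by positivity
          field_simp
  have hhalf2 : (Real.exp 1 - 1) / (Real.exp 1 + 1) < 1 / 2 := by
    rw [div_lt_div_iff₀ (by positivity) (by norm_num)]; linarith
  exact ⟨hN, hD, hNb, hDb, hhalf, hne, hquot, hhalf2⟩
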